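/- Let K be a field of characteristic zero, R = K[x,y,z], and let a ≥ c ≥ 2 and α ∈ {1,2} be integers. Let G = R/(x^a, y^3 − x^α z^{3−α}, z^c) and set k = ⌊(a+c)/2⌋. Then h_G(k) = 3c−2 if a = c, h_G(k) = 3c−1 if a = c+1, and h_G(k) = 3c if a ≥ c+2. Moreover, if a ≥ c+4, then h_G(k) = h_G(k−1). -/

import Mathlib

open MvPolynomial

/-- The degree-`i` graded component of `R/I`, i.e. the image in `R/I` of the
space of homogeneous polynomials of degree `i`. -/
noncomputable def grComponent (K : Type*) [Field K]
    (I : Ideal (MvPolynomial (Fin 3) K)) (i : ℕ) :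
    Submodule K (MvPolynomial (Fin 3) K ⧸ I) :=
  (MvPolynomial.homogeneousSubmodule (Fin 3) K i).map
    (Ideal.Quotient.mkₐ K I).toLinearMap

/-- The Hilbert function of `R/I`. -/
noncomputable def hilb (K : Type*) [Field K]
    (I : Ideal (MvPolynomial (Fin 3) K)) (i : ℕ) : ℕ :=
  Module.finrank K (grComponent K I i)

/-- `R/I` has the weak Lefschetz property: there is a linear form `L` such that
for every `i`, multiplication by `L` from `[R/I]_i` to `[R/I]_{i+1}` is
injective or surjective. -/
def hasWLP (K : Type*) [Field K] (I : Ideal (MvPolynomial (Fin 3) K)) : Prop :=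
  ∃ L : MvPolynomial (Fin 3) K, L.IsHomogeneous 1 ∧
    ∀ i : ℕ,
      (∀ u ∈ grComponent K I i, ∀ v ∈ grComponent K I i,
          Ideal.Quotient.mk I L * u = Ideal.Quotient.mk I L * v → u = v) ∨
      (∀ w ∈ grComponent K I (i + 1), ∃ u ∈ grComponent K I i,
          Ideal.Quotient.mk I L * u = w)

noncomputable section CIAux
variable (K : Type*) [Field K] (a c α : ℕ)

abbrev A1 := AdjoinRoot ((Polynomial.X : Polynomial K) ^ a)
abbrev A2 := AdjoinRoot ((Polynomial.X : Polynomial (A1 K a)) ^ c)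

def xA2 : A2 K a c := algebraMap (A1 K a) (A2 K a c) (AdjoinRoot.root _)
def zA2 : A2 K a c := AdjoinRoot.root _
def w : A2 K a c := xA2 K a c ^ α * zA2 K a c ^ (3 - α)

abbrev B := AdjoinRoot ((Polynomial.X : Polynomial (A2 K a c)) ^ 3 - Polynomial.C (w K a c α))

def xB : B K a c α := algebraMap (A2 K a c) _ (xA2 K a c)
def yB : B K a c α := AdjoinRoot.root _
def zB : B K a c α := algebraMap (A2 K a c) _ (zA2 K a c)

variable {a c}

def b1 (ha : 0 < a) : Module.Basis (Fin a) K (A1 K a) :=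
  ((AdjoinRoot.powerBasis' (Polynomial.monic_X_pow a)).basis).reindex
    (finCongr (by simp))

theorem ntA1 (ha : 0 < a) : Nontrivial (A1 K a) :=
  nontrivial_of_ne (b1 K ha ⟨0, ha⟩) 0 (Module.Basis.ne_zero _ _)

def b2 (ha : 0 < a) (hc : 0 < c) : Module.Basis (Fin c) (A1 K a) (A2 K a c) :=
  haveI := ntA1 K ha
  ((AdjoinRoot.powerBasis' (Polynomial.monic_X_pow c)).basis).reindex
    (finCongr (by simp))

theorem ntA2 (ha : 0 < a) (hc : 0 < c) : Nontrivial (A2 K a c) :=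
  haveI := ntA1 K ha
  nontrivial_of_ne (b2 K ha hc ⟨0, hc⟩) 0 (Module.Basis.ne_zero _ _)

def b3 (ha : 0 < a) (hc : 0 < c) : Module.Basis (Fin 3) (A2 K a c) (B K a c α) :=
  haveI := ntA2 K ha hc
  ((AdjoinRoot.powerBasis' (Polynomial.monic_X_pow_sub_C (w K a c α) (three_ne_zero))).basis).reindex
    (finCongr (by rw [AdjoinRoot.powerBasis'_dim, Polynomial.natDegree_X_pow_sub_C]))

def bB (ha : 0 < a) (hc : 0 < c) : Module.Basis ((Fin a × Fin c) × Fin 3) K (B K a c α) :=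
  ((b1 K ha).smulTower (b2 K ha hc)).smulTower (b3 K α ha hc)

theorem bB_apply (ha : 0 < a) (hc : 0 < c) (i : Fin a) (l : Fin c) (j : Fin 3) :
    bB K α ha hc ((i, l), j) = xB K a c α ^ (i:ℕ) * yB K a c α ^ (j:ℕ) * zB K a c α ^ (l:ℕ) := by
  have e1 : b1 K ha i = AdjoinRoot.root _ ^ (i:ℕ) := by
    rw [b1, Module.Basis.reindex_apply, PowerBasis.basis_eq_pow]; simp
  have e2 : b2 K ha hc l = zA2 K a c ^ (l:ℕ) := by
    rw [b2, zA2, Module.Basis.reindex_apply, PowerBasis.basis_eq_pow]; simp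
  have e3 : b3 K α ha hc j = AdjoinRoot.root _ ^ (j:ℕ) := by
    rw [b3, Module.Basis.reindex_apply, PowerBasis.basis_eq_pow]; simp
  rw [bB, Module.Basis.smulTower_apply, Module.Basis.smulTower_apply, e1, e2, e3,
    Algebra.smul_def, Algebra.smul_def, map_mul, map_pow, map_pow]
  simp only [xB, yB, zB, xA2, map_mul, map_pow]
  ring

theorem xB_pow_a : xB K a c α ^ a = 0 := by
  have h : (AdjoinRoot.root ((Polynomial.X : Polynomial K) ^ a)) ^ a = 0 := by
    have := AdjoinRoot.mk_self (f := (Polynomial.X : Polynomial K) ^ a)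
    rwa [map_pow, AdjoinRoot.mk_X] at this
  rw [xB, xA2, ← map_pow, ← map_pow, h, map_zero, map_zero]

theorem zB_pow_c : zB K a c α ^ c = 0 := by
  have h : (zA2 K a c) ^ c = 0 := by
    have := AdjoinRoot.mk_self (f := (Polynomial.X : Polynomial (A1 K a)) ^ c)
    rwa [map_pow, AdjoinRoot.mk_X] at this
  rw [zB, ← map_pow, h, map_zero]

theorem yB_cube : yB K a c α ^ 3 = xB K a c α ^ α * zB K a c α ^ (3 - α) := by
  have h := AdjoinRoot.mk_self (f := (Polynomial.X : Polynomial (A2 K a c)) ^ 3 - Polynomial.C (w K a c α))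
  rw [map_sub, map_pow, AdjoinRoot.mk_X, AdjoinRoot.mk_C, sub_eq_zero] at h
  rw [yB, h]
  simp only [w, xB, zB, map_mul, map_pow, AdjoinRoot.algebraMap_eq]
  exact (map_mul (AdjoinRoot.of ((Polynomial.X : Polynomial (A2 K a c)) ^ 3 - Polynomial.C (w K a c α))) _ _).trans (congrArg₂ (· * ·) (map_pow (AdjoinRoot.of ((Polynomial.X : Polynomial (A2 K a c)) ^ 3 - Polynomial.C (w K a c α))) _ _) (map_pow (AdjoinRoot.of ((Polynomial.X : Polynomial (A2 K a c)) ^ 3 - Polynomial.C (w K a c α))) _ _))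

def theta : MvPolynomial (Fin 3) K →ₐ[K] B K a c α :=
  MvPolynomial.aeval ![xB K a c α, yB K a c α, zB K a c α]

theorem theta_mono (i j l : ℕ) :
    theta K α (X 0 ^ i * X 1 ^ j * X 2 ^ l) =
      xB K a c α ^ i * yB K a c α ^ j * zB K a c α ^ l := by
  simp [theta]

end CIAux

noncomputable section Main
variable {K : Type*} [Field K] {a c α : ℕ}

theorem theta_vanish :
    ∀ p ∈ Ideal.span {(X 0 : MvPolynomial (Fin 3) K) ^ a,
      X 1 ^ 3 - X 0 ^ α * X 2 ^ (3 - α), X 2 ^ c},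
      (theta K α p : B K a c α) = 0 := by
  have h : Ideal.span {(X 0 : MvPolynomial (Fin 3) K) ^ a,
      X 1 ^ 3 - X 0 ^ α * X 2 ^ (3 - α), X 2 ^ c} ≤ RingHom.ker (theta K α (a := a) (c := c)).toRingHom := by
    rw [Ideal.span_le]
    rintro q (rfl | rfl | rfl)
    · simp only [SetLike.mem_coe, RingHom.mem_ker, AlgHom.toRingHom_eq_coe,
        RingHom.coe_coe, map_pow]
      have : theta K α (X 0 : MvPolynomial (Fin 3) K) = xB K a c α := by simp [theta]
      rw [this, xB_pow_a]
    · simp only [SetLike.mem_coe, RingHom.mem_ker, AlgHom.toRingHom_eq_coe,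
        RingHom.coe_coe, map_sub, map_pow, map_mul]
      have h1 : theta K α (X 1 : MvPolynomial (Fin 3) K) = yB K a c α := by simp [theta]
      have h0 : theta K α (X 0 : MvPolynomial (Fin 3) K) = xB K a c α := by simp [theta]
      have h2 : theta K α (X 2 : MvPolynomial (Fin 3) K) = zB K a c α := by simp [theta]
      rw [h0, h1, h2, yB_cube, sub_self]
    · simp only [SetLike.mem_coe, RingHom.mem_ker, AlgHom.toRingHom_eq_coe,
        RingHom.coe_coe, map_pow]
      have : theta K α (X 2 : MvPolynomial (Fin 3) K) = zB K a c α := by simp [theta]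
      rw [this, zB_pow_c]
  intro p hp
  exact h hp

theorem hilb_eq (ha : 0 < a) (hc : 0 < c) (hα : α ≤ 3) (n : ℕ) :
    hilb K (Ideal.span {(X 0 : MvPolynomial (Fin 3) K) ^ a,
      X 1 ^ 3 - X 0 ^ α * X 2 ^ (3 - α), X 2 ^ c}) n =
      ((Finset.range a ×ˢ Finset.range 3 ×ˢ Finset.range c).filter
        (fun p => p.1 + p.2.1 + p.2.2 = n)).card := by
  set I : Ideal (MvPolynomial (Fin 3) K) := Ideal.span {(X 0 : MvPolynomial (Fin 3) K) ^ a,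
      X 1 ^ 3 - X 0 ^ α * X 2 ^ (3 - α), X 2 ^ c} with hI
  set T : Finset (ℕ × ℕ × ℕ) := (Finset.range a ×ˢ Finset.range 3 ×ˢ Finset.range c).filter
        (fun p => p.1 + p.2.1 + p.2.2 = n) with hT
  set fam : ℕ × ℕ × ℕ → MvPolynomial (Fin 3) K ⧸ I :=
    fun p => Ideal.Quotient.mk I (X 0 ^ p.1 * X 1 ^ p.2.1 * X 2 ^ p.2.2) with hfam
  have hmemT : ∀ p : ℕ × ℕ × ℕ, p ∈ T ↔ (p.1 < a ∧ p.2.1 < 3 ∧ p.2.2 < c ∧ p.1 + p.2.1 + p.2.2 = n) := by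
    intro p
    simp only [hT, Finset.mem_filter, Finset.mem_product, Finset.mem_range]
    tauto
  have hmono : ∀ i j l : ℕ, (X 0 ^ i * X 1 ^ j * X 2 ^ l : MvPolynomial (Fin 3) K).IsHomogeneous (i + j + l) := by
    intro i j l
    have := (((isHomogeneous_X K (0 : Fin 3)).pow i).mul
      ((isHomogeneous_X K (1 : Fin 3)).pow j)).mul ((isHomogeneous_X K (2 : Fin 3)).pow l)
    simpa using this
  have red : ∀ j i l : ℕ, i + j + l = n →
      fam (i, j, l) ∈ Submodule.span K (fam '' ↑T) := by
    intro j
    induction j using Nat.strong_induction_on with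
    | _ j IH =>
      intro i l hsum
      by_cases hia : a ≤ i
      · have hz : fam (i, j, l) = 0 := by
          rw [hfam]
          simp only []
          rw [Ideal.Quotient.eq_zero_iff_mem]
          have hg : (X 0 : MvPolynomial (Fin 3) K) ^ a ∈ I := Ideal.subset_span (by simp)
          have hmul := Ideal.mul_mem_right ((X 0 : MvPolynomial (Fin 3) K) ^ (i - a) * X 1 ^ j * X 2 ^ l) _ hg
          have hpw : (X 0 : MvPolynomial (Fin 3) K) ^ i = X 0 ^ a * X 0 ^ (i - a) := by
            rw [← pow_add]; congr 1; omega
          have heq : (X 0 : MvPolynomial (Fin 3) K) ^ i * X 1 ^ j * X 2 ^ l =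
              X 0 ^ a * (X 0 ^ (i - a) * X 1 ^ j * X 2 ^ l) := by
            rw [hpw]; ring
          rw [heq]; exact hmul
        rw [hz]; exact Submodule.zero_mem _
      · by_cases hlc : c ≤ l
        · have hz : fam (i, j, l) = 0 := by
            rw [hfam]
            simp only []
            rw [Ideal.Quotient.eq_zero_iff_mem]
            have hg : (X 2 : MvPolynomial (Fin 3) K) ^ c ∈ I := Ideal.subset_span (by simp)
            have hmul := Ideal.mul_mem_right ((X 0 : MvPolynomial (Fin 3) K) ^ i * X 1 ^ j * X 2 ^ (l - c)) _ hg
            have hpw : (X 2 : MvPolynomial (Fin 3) K) ^ l = X 2 ^ c * X 2 ^ (l - c) := by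
              rw [← pow_add]; congr 1; omega
            have heq : (X 0 : MvPolynomial (Fin 3) K) ^ i * X 1 ^ j * X 2 ^ l =
                X 2 ^ c * (X 0 ^ i * X 1 ^ j * X 2 ^ (l - c)) := by
              rw [hpw]; ring
            rw [heq]; exact hmul
          rw [hz]; exact Submodule.zero_mem _
        · by_cases hj3 : 3 ≤ j
          · have heq : fam (i, j, l) = fam (i + α, j - 3, l + (3 - α)) := by
              rw [hfam]
              simp only []
              rw [Ideal.Quotient.eq]
              have hg : ((X 1 : MvPolynomial (Fin 3) K) ^ 3 - X 0 ^ α * X 2 ^ (3 - α)) ∈ I :=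
                Ideal.subset_span (by simp)
              have hmul := Ideal.mul_mem_right ((X 0 : MvPolynomial (Fin 3) K) ^ i * X 1 ^ (j - 3) * X 2 ^ l) _ hg
              have hpoly : (X 0 : MvPolynomial (Fin 3) K) ^ i * X 1 ^ j * X 2 ^ l -
                  X 0 ^ (i + α) * X 1 ^ (j - 3) * X 2 ^ (l + (3 - α)) =
                  ((X 1 : MvPolynomial (Fin 3) K) ^ 3 - X 0 ^ α * X 2 ^ (3 - α)) *
                    (X 0 ^ i * X 1 ^ (j - 3) * X 2 ^ l) := by
                have e1 : (X 1 : MvPolynomial (Fin 3) K) ^ j = X 1 ^ (j - 3) * X 1 ^ 3 := by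
                  rw [← pow_add]; congr 1; omega
                have e2 : (X 0 : MvPolynomial (Fin 3) K) ^ (i + α) = X 0 ^ i * X 0 ^ α := by
                  rw [← pow_add]
                have e3 : (X 2 : MvPolynomial (Fin 3) K) ^ (l + (3 - α)) = X 2 ^ l * X 2 ^ (3 - α) := by
                  rw [← pow_add]
                rw [e1, e2, e3]
                ring
              rw [hpoly]; exact hmul
            rw [heq]
            exact IH (j - 3) (by omega) (i + α) (l + (3 - α)) (by omega)
          · apply Submodule.subset_span
            refine ⟨(i, j, l), ?_, rfl⟩
            rw [Finset.mem_coe, hmemT]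
            dsimp only
            omega
  -- the span description of the graded component
  have mono_eq : ∀ d : Fin 3 →₀ ℕ, (monomial d (1 : K)) = X 0 ^ d 0 * X 1 ^ d 1 * X 2 ^ d 2 := by
    intro d
    rw [monomial_eq, C_1, one_mul,
      Finsupp.prod_fintype _ _ (fun i => pow_zero _), Fin.prod_univ_three]
  have deg3 : ∀ d : Fin 3 →₀ ℕ, (Finsupp.weight (1 : Fin 3 → ℕ)) d = d 0 + d 1 + d 2 := by
    intro d
    rw [show (1 : Fin 3 → ℕ) = fun _ => 1 from rfl, ← Finsupp.degree_eq_weight_one, Finsupp.degree_apply,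
      Finset.sum_subset (Finset.subset_univ d.support) (by intro x _ hx; simpa using hx),
      Fin.sum_univ_three]
  have hspan : grComponent K I n = Submodule.span K (fam '' ↑T) := by
    apply le_antisymm
    · rintro v ⟨p, hp, rfl⟩
      have hp' : p.IsHomogeneous n := hp
      have hrepr : (Ideal.Quotient.mkₐ K I).toLinearMap p =
          ∑ d ∈ p.support, coeff d p • fam (d 0, d 1, d 2) := by
        conv_lhs => rw [← p.support_sum_monomial_coeff]
        rw [map_sum]
        refine Finset.sum_congr rfl ?_
        intro d _
        rw [hfam]
        simp only []
        rw [← mono_eq]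
        have : (monomial d (coeff d p)) = (coeff d p) • (monomial d (1 : K)) := by
          rw [smul_monomial, smul_eq_mul, mul_one]
        rw [this, map_smul]
        rfl
      rw [hrepr]
      apply Submodule.sum_mem
      intro d hd
      apply Submodule.smul_mem
      have hdeg : d 0 + d 1 + d 2 = n := by
        have := hp' (mem_support_iff.mp hd)
        rw [deg3] at this
        exact this
      exact red (d 1) (d 0) (d 2) hdeg
    · rw [Submodule.span_le]
      rintro v ⟨p, hpT, rfl⟩
      rw [Finset.mem_coe, hmemT] at hpT
      refine ⟨X 0 ^ p.1 * X 1 ^ p.2.1 * X 2 ^ p.2.2, ?_, rfl⟩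
      show (X 0 ^ p.1 * X 1 ^ p.2.1 * X 2 ^ p.2.2 : MvPolynomial (Fin 3) K).IsHomogeneous n
      rw [← hpT.2.2.2]
      exact hmono _ _ _
  -- linear independence
  have hker : ∀ q ∈ I, (theta K α q : B K a c α) = 0 := theta_vanish
  set thbar : MvPolynomial (Fin 3) K ⧸ I →ₐ[K] B K a c α :=
    Ideal.Quotient.liftₐ I (theta K α) hker with hthbar
  set ι : {x // x ∈ T} → (Fin a × Fin c) × Fin 3 := fun t =>
    ((⟨t.1.1, ((hmemT t.1).mp t.2).1⟩, ⟨t.1.2.2, ((hmemT t.1).mp t.2).2.2.1⟩),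
      ⟨t.1.2.1, ((hmemT t.1).mp t.2).2.1⟩) with hι
  have hinj : Function.Injective ι := by
    intro s t hst
    rw [hι] at hst
    simp only [Prod.mk.injEq, Fin.mk.injEq] at hst
    apply Subtype.ext
    ext <;> tauto
  have hcomp : ∀ t : {x // x ∈ T}, thbar (fam t.1) = bB K α ha hc (ι t) := by
    intro t
    rw [hfam, hthbar]
    simp only []
    show theta K α (X 0 ^ t.1.1 * X 1 ^ t.1.2.1 * X 2 ^ t.1.2.2) = _
    rw [hι]
    dsimp only
    rw [bB_apply]
    exact theta_mono K α _ _ _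
  have hind : LinearIndependent K (fun t : {x // x ∈ T} => fam t.1) := by
    apply LinearIndependent.of_comp thbar.toLinearMap
    have : (thbar.toLinearMap ∘ fun t : {x // x ∈ T} => fam t.1) =
        (fun t => bB K α ha hc (ι t)) := funext fun t => hcomp t
    rw [this]
    exact (bB K α ha hc).linearIndependent.comp ι hinj
  have himg : fam '' ↑T = Set.range (fun t : {x // x ∈ T} => fam t.1) := by
    rw [Set.image_eq_range]
    rfl
  rw [hilb, hspan, himg, finrank_span_eq_card hind, Fintype.card_coe]

theorem card_eq_2d (a c n : ℕ) :
    ((Finset.range a ×ˢ Finset.range 3 ×ˢ Finset.range c).filter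
      (fun p => p.1 + p.2.1 + p.2.2 = n)).card =
    ((Finset.range 3 ×ˢ Finset.range c).filter
      (fun q => q.1 + q.2 ≤ n ∧ n - q.1 - q.2 < a)).card := by
  apply Finset.card_bij' (fun p _ => (p.2.1, p.2.2)) (fun q _ => (n - q.1 - q.2, q.1, q.2))
  · rintro ⟨i, j, l⟩ h
    dsimp only
    simp only [Finset.mem_filter, Finset.mem_product, Finset.mem_range] at h ⊢
    omega
  · rintro ⟨j, l⟩ h
    dsimp only
    simp only [Finset.mem_filter, Finset.mem_product, Finset.mem_range] at h ⊢
    obtain ⟨⟨h1, h2⟩, h3, h4⟩ := h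
    exact ⟨⟨h4, h1, h2⟩, by omega⟩
  · rintro ⟨i, j, l⟩ h
    simp only [Finset.mem_filter, Finset.mem_product, Finset.mem_range] at h
    dsimp only
    simp only [Prod.ext_iff]
    obtain ⟨⟨h1, h2, h3⟩, h4⟩ := h
    exact ⟨by omega, trivial⟩
  · rintro ⟨j, l⟩ h
    rfl

theorem count_full (a c n : ℕ) (h1 : c + 1 ≤ n) (h2 : n < a) :
    ((Finset.range 3 ×ˢ Finset.range c).filter
      (fun q => q.1 + q.2 ≤ n ∧ n - q.1 - q.2 < a)).card = 3 * c := by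
  rw [Finset.filter_true_of_mem, Finset.card_product, Finset.card_range, Finset.card_range]
  rintro ⟨j, l⟩ hm
  simp only [Finset.mem_product, Finset.mem_range] at hm
  omega

end Main

theorem stmt_9 (K : Type*) [Field K] [CharZero K] (a c α : ℕ)
    (hc : 2 ≤ c) (hac : c ≤ a) (hα : α = 1 ∨ α = 2) :
    let I : Ideal (MvPolynomial (Fin 3) K) := Ideal.span
      {(X 0 : MvPolynomial (Fin 3) K) ^ a, X 1 ^ 3 - X 0 ^ α * X 2 ^ (3 - α), X 2 ^ c}
    let k : ℕ := (a + c) / 2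
    ((a = c → hilb K I k = 3 * c - 2) ∧
     (a = c + 1 → hilb K I k = 3 * c - 1) ∧
     (c + 2 ≤ a → hilb K I k = 3 * c) ∧
     (c + 4 ≤ a → hilb K I k = hilb K I (k - 1))) := by
  intro I k
  have ha : 0 < a := by omega
  have hc' : 0 < c := by omega
  have hα' : α ≤ 3 := by omega
  have key : ∀ n : ℕ, hilb K I n = ((Finset.range 3 ×ˢ Finset.range c).filter
      (fun q => q.1 + q.2 ≤ n ∧ n - q.1 - q.2 < a)).card :=
    fun n => (hilb_eq ha hc' hα' n).trans (card_eq_2d a c n)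
  have hkk : k = (a + c) / 2 := rfl
  refine ⟨?_, ?_, ?_, ?_⟩
  · intro hAC
    have hk : k = c := by omega
    rw [key, hk]
    have hneg : (Finset.range 3 ×ˢ Finset.range c).filter
        (fun q => ¬(q.1 + q.2 ≤ c ∧ c - q.1 - q.2 < a)) = {(0, 0), (2, c - 1)} := by
      apply Finset.ext
      rintro ⟨j, l⟩
      simp only [Finset.mem_filter, Finset.mem_product, Finset.mem_range,
        Finset.mem_insert, Finset.mem_singleton, Prod.ext_iff]
      omega
    have hsplit := Finset.card_filter_add_card_filter_not
      (s := Finset.range 3 ×ˢ Finset.range c)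
      (p := fun q => q.1 + q.2 ≤ c ∧ c - q.1 - q.2 < a)
    rw [hneg] at hsplit
    have h2 : ({((0:ℕ), (0:ℕ)), ((2:ℕ), c - 1)} : Finset (ℕ × ℕ)).card = 2 := by
      rw [Finset.card_insert_of_notMem (by simp [Prod.ext_iff]), Finset.card_singleton]
    rw [h2, Finset.card_product, Finset.card_range, Finset.card_range] at hsplit
    omega
  · intro hAC
    have hk : k = c := by omega
    rw [key, hk]
    have hneg : (Finset.range 3 ×ˢ Finset.range c).filter
        (fun q => ¬(q.1 + q.2 ≤ c ∧ c - q.1 - q.2 < a)) = {(2, c - 1)} := by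
      apply Finset.ext
      rintro ⟨j, l⟩
      simp only [Finset.mem_filter, Finset.mem_product, Finset.mem_range,
        Finset.mem_singleton, Prod.ext_iff]
      omega
    have hsplit := Finset.card_filter_add_card_filter_not
      (s := Finset.range 3 ×ˢ Finset.range c)
      (p := fun q => q.1 + q.2 ≤ c ∧ c - q.1 - q.2 < a)
    rw [hneg, Finset.card_singleton, Finset.card_product, Finset.card_range,
      Finset.card_range] at hsplit
    omega
  · intro hAC
    rw [key, count_full a c k (by omega) (by omega)]
  · intro hAC
    rw [key, key, count_full a c k (by omega) (by omega),
      count_full a c (k - 1) (by omega) (by omega)]
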